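/- Let α ≠ 0, β, γ, λ be real numbers. On the interval (−1, 1), the function A(z) = β·(1−z²) + γ·z·√(1−z²) + λ·α²·z·√(1−z²)·arcsin(z) satisfies the ODE −(1−z²)²·A''(z) − z·(1−z²)·A'(z) − 2·A(z) = −2λ·α²·(1−z²)². -/

import Mathlib

open Real

private lemma hs_deriv (z : ℝ) (h1 : -1 < z) (h2 : z < 1) :
    HasDerivAt (fun z : ℝ => Real.sqrt (1 - z ^ 2)) (-z / Real.sqrt (1 - z ^ 2)) z := by
  have hpos : (0:ℝ) < 1 - z ^ 2 := by nlinarith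
  have hinner : HasDerivAt (fun z : ℝ => 1 - z ^ 2) (-(2 * z)) z := by
    simpa using (hasDerivAt_pow 2 z).const_sub 1
  have := (Real.hasDerivAt_sqrt hpos.ne').comp z hinner
  have hsne : Real.sqrt (1 - z ^ 2) ≠ 0 := (Real.sqrt_pos.mpr hpos).ne'
  refine this.congr_deriv ?_
  field_simp

noncomputable def A' (beta gam lam alpha : ℝ) : ℝ → ℝ := fun z =>
  -(2 * beta * z) + gam * ((1 - 2 * z ^ 2) / Real.sqrt (1 - z ^ 2))
    + lam * alpha ^ 2 * ((1 - 2 * z ^ 2) / Real.sqrt (1 - z ^ 2) * Real.arcsin z + z)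

private lemma hA' (beta gam lam alpha : ℝ) (z : ℝ) (h1 : -1 < z) (h2 : z < 1) :
    HasDerivAt (fun z => beta * (1 - z ^ 2) + gam * z * Real.sqrt (1 - z ^ 2)
      + lam * alpha ^ 2 * z * Real.sqrt (1 - z ^ 2) * Real.arcsin z)
      (A' beta gam lam alpha z) z := by
  have hpos : (0:ℝ) < 1 - z ^ 2 := by nlinarith
  have hsne : Real.sqrt (1 - z ^ 2) ≠ 0 := (Real.sqrt_pos.mpr hpos).ne'
  have hs2 : Real.sqrt (1 - z ^ 2) ^ 2 = 1 - z ^ 2 := Real.sq_sqrt hpos.le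
  have d1 : HasDerivAt (fun z : ℝ => beta * (1 - z ^ 2)) (beta * -(2 * z)) z := by
    exact ((hasDerivAt_pow 2 z).const_sub 1).const_mul beta |>.congr_deriv (by ring)
  have d2 : HasDerivAt (fun z : ℝ => gam * z * Real.sqrt (1 - z ^ 2))
      (gam * Real.sqrt (1 - z ^ 2) + gam * z * (-z / Real.sqrt (1 - z ^ 2))) z := by
    have := ((hasDerivAt_id z).const_mul gam).mul (hs_deriv z h1 h2)
    refine this.congr_deriv ?_; simp only [id_eq]; ring
  have d3 : HasDerivAt (fun z : ℝ => lam * alpha ^ 2 * z * Real.sqrt (1 - z ^ 2) * Real.arcsin z)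
      ((lam * alpha ^ 2 * Real.sqrt (1 - z ^ 2) + lam * alpha ^ 2 * z * (-z / Real.sqrt (1 - z ^ 2))) * Real.arcsin z
        + lam * alpha ^ 2 * z * Real.sqrt (1 - z ^ 2) * (1 / Real.sqrt (1 - z ^ 2))) z := by
    have := (((hasDerivAt_id z).const_mul (lam * alpha ^ 2)).mul (hs_deriv z h1 h2)).mul
      (Real.hasDerivAt_arcsin h1.ne' h2.ne)
    refine this.congr_deriv ?_; simp only [id_eq, Pi.mul_apply]; ring
  have := (d1.add d2).add d3
  refine this.congr_deriv ?_
  unfold A'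
  field_simp
  linear_combination (gam + lam * alpha ^ 2 * Real.arcsin z) * hs2

private lemma hq (z : ℝ) (h1 : -1 < z) (h2 : z < 1) :
    HasDerivAt (fun z : ℝ => (1 - 2 * z ^ 2) / Real.sqrt (1 - z ^ 2))
      ((-(4 * z) * Real.sqrt (1 - z ^ 2) - (1 - 2 * z ^ 2) * (-z / Real.sqrt (1 - z ^ 2)))
        / Real.sqrt (1 - z ^ 2) ^ 2) z := by
  have hpos : (0:ℝ) < 1 - z ^ 2 := by nlinarith
  have hsne : Real.sqrt (1 - z ^ 2) ≠ 0 := (Real.sqrt_pos.mpr hpos).ne'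
  have hnum : HasDerivAt (fun z : ℝ => 1 - 2 * z ^ 2) (-(4 * z)) z := by
    have := ((hasDerivAt_pow 2 z).const_mul 2).const_sub 1
    refine this.congr_deriv ?_; simp; ring
  exact hnum.div (hs_deriv z h1 h2) hsne

private lemma hA'' (beta gam lam alpha : ℝ) (z : ℝ) (h1 : -1 < z) (h2 : z < 1) :
    HasDerivAt (A' beta gam lam alpha)
      (-(2 * beta) + gam * ((-(4 * z) * Real.sqrt (1 - z ^ 2)
          - (1 - 2 * z ^ 2) * (-z / Real.sqrt (1 - z ^ 2))) / Real.sqrt (1 - z ^ 2) ^ 2)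
        + lam * alpha ^ 2 * (((-(4 * z) * Real.sqrt (1 - z ^ 2)
          - (1 - 2 * z ^ 2) * (-z / Real.sqrt (1 - z ^ 2))) / Real.sqrt (1 - z ^ 2) ^ 2) * Real.arcsin z
          + (1 - 2 * z ^ 2) / Real.sqrt (1 - z ^ 2) * (1 / Real.sqrt (1 - z ^ 2)) + 1)) z := by
  have d1 : HasDerivAt (fun z : ℝ => -(2 * beta * z)) (-(2 * beta)) z := by
    have := ((hasDerivAt_id z).const_mul (2 * beta)).neg
    refine this.congr_deriv ?_; ring
  have d2 := (hq z h1 h2).const_mul gam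
  have d3 := (((hq z h1 h2).mul (Real.hasDerivAt_arcsin h1.ne' h2.ne)).add
    (hasDerivAt_id z)).const_mul (lam * alpha ^ 2)
  exact (d1.add d2).add d3

/-- On `(−1,1)`, `A(z) = β(1−z²) + γz√(1−z²) + λα²z√(1−z²)·arcsin z` solves
`−(1−z²)²A'' − z(1−z²)A' − 2A = −2λα²(1−z²)²`. -/
theorem stmt_9 (alpha beta gam lam : ℝ) (ha : alpha ≠ 0) :
    ∀ z : ℝ, -1 < z → z < 1 →
      -(1 - z ^ 2) ^ 2 *
          deriv (deriv (fun z => beta * (1 - z ^ 2) + gam * z * Real.sqrt (1 - z ^ 2)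
            + lam * alpha ^ 2 * z * Real.sqrt (1 - z ^ 2) * Real.arcsin z)) z
      - z * (1 - z ^ 2) *
          deriv (fun z => beta * (1 - z ^ 2) + gam * z * Real.sqrt (1 - z ^ 2)
            + lam * alpha ^ 2 * z * Real.sqrt (1 - z ^ 2) * Real.arcsin z) z
      - 2 * (beta * (1 - z ^ 2) + gam * z * Real.sqrt (1 - z ^ 2)
            + lam * alpha ^ 2 * z * Real.sqrt (1 - z ^ 2) * Real.arcsin z)
      = -2 * lam * alpha ^ 2 * (1 - z ^ 2) ^ 2 := by
  intro z h1 h2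
  have hpos : (0:ℝ) < 1 - z ^ 2 := by nlinarith
  have hsne : Real.sqrt (1 - z ^ 2) ≠ 0 := (Real.sqrt_pos.mpr hpos).ne'
  have hs2 : Real.sqrt (1 - z ^ 2) ^ 2 = 1 - z ^ 2 := Real.sq_sqrt hpos.le
  have hd1 : deriv (fun z => beta * (1 - z ^ 2) + gam * z * Real.sqrt (1 - z ^ 2)
      + lam * alpha ^ 2 * z * Real.sqrt (1 - z ^ 2) * Real.arcsin z) z
      = A' beta gam lam alpha z := (hA' beta gam lam alpha z h1 h2).deriv
  have hev : deriv (fun z => beta * (1 - z ^ 2) + gam * z * Real.sqrt (1 - z ^ 2)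
      + lam * alpha ^ 2 * z * Real.sqrt (1 - z ^ 2) * Real.arcsin z)
      =ᶠ[nhds z] A' beta gam lam alpha := by
    filter_upwards [isOpen_Ioo.mem_nhds (Set.mem_Ioo.mpr ⟨h1, h2⟩ : z ∈ Set.Ioo (-1:ℝ) 1)]
      with w hw using (hA' beta gam lam alpha w hw.1 hw.2).deriv
  have hd2 : deriv (deriv (fun z => beta * (1 - z ^ 2) + gam * z * Real.sqrt (1 - z ^ 2)
      + lam * alpha ^ 2 * z * Real.sqrt (1 - z ^ 2) * Real.arcsin z)) z
      = -(2 * beta) + gam * ((-(4 * z) * Real.sqrt (1 - z ^ 2)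
          - (1 - 2 * z ^ 2) * (-z / Real.sqrt (1 - z ^ 2))) / Real.sqrt (1 - z ^ 2) ^ 2)
        + lam * alpha ^ 2 * (((-(4 * z) * Real.sqrt (1 - z ^ 2)
          - (1 - 2 * z ^ 2) * (-z / Real.sqrt (1 - z ^ 2))) / Real.sqrt (1 - z ^ 2) ^ 2) * Real.arcsin z
          + (1 - 2 * z ^ 2) / Real.sqrt (1 - z ^ 2) * (1 / Real.sqrt (1 - z ^ 2)) + 1) := by
    rw [hev.deriv_eq]
    exact (hA'' beta gam lam alpha z h1 h2).deriv
  rw [hd1, hd2]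
  unfold A'
  field_simp
  linear_combination ((-2*z * Real.sqrt (1 - z ^ 2) ^ 2 + z - 3*z^3 + 2*z^5) * (gam + lam * alpha ^ 2 * Real.arcsin z) + lam * alpha ^ 2 * Real.sqrt (1 - z ^ 2) * (1 - 3*z^2 + 2*z^4)) * hs2
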